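/- Let L be a Lie algebra over a field F of characteristic 0, and let H be a subalgebra of L such that L decomposes as the direct sum of simultaneous eigenspaces L_ξ = {x ∈ L | [h,x] = ξ(h)x for all h ∈ H} over linear functionals ξ : H → F. Then H is abelian. -/

import Mathlib

open DirectSum in
/-- An ad-diagonalizable subalgebra of a Lie algebra is automatically abelian. -/
theorem stmt_0 (F L : Type*) [Field F] [CharZero F] [LieRing L] [LieAlgebra F L]
    (H : LieSubalgebra F L)
    (eig : Module.Dual F H → Submodule F L)
    (heig : ∀ (ξ : Module.Dual F H) (x : L),
      x ∈ eig ξ ↔ ∀ h : H, ⁅(h : L), x⁆ = ξ h • x)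
    (hindep : iSupIndep eig) (hspan : ⨆ ξ, eig ξ = ⊤) :
    ∀ x y : H, ⁅x, y⁆ = 0 := by
  classical
  have hint : DirectSum.IsInternal eig :=
    (DirectSum.isInternal_submodule_iff_iSupIndep_and_iSup_eq_top eig).mpr ⟨hindep, hspan⟩
  set e : (⨁ ξ, eig ξ) ≃ₗ[F] L := LinearEquiv.ofBijective (DirectSum.coeLinearMap eig) hint
    with he
  set S : H → ((⨁ ξ, eig ξ) →ₗ[F] ⨁ ξ, eig ξ) :=
    fun h => DFinsupp.mapRange.linearMap (fun ξ => (ξ h) • (LinearMap.id : eig ξ →ₗ[F] eig ξ))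
    with hS
  have Sapp : ∀ h c ξ, S h c ξ = (ξ h) • c ξ := by
    intro h c ξ
    rw [hS]
    erw [DFinsupp.mapRange_apply]
    · rfl
    · intro i; simp
  have key : ∀ (h : H) (c : ⨁ ξ, eig ξ), ⁅(h : L), e c⁆ = e (S h c) := by
    intro h c
    induction c using DirectSum.induction_on with
    | zero => rw [(S h).map_zero, e.map_zero, lie_zero]
    | of ξ v =>
      have h1 : e (DirectSum.of (fun ξ => eig ξ) ξ v) = (v : L) :=
        DirectSum.coeLinearMap_of eig ξ v
      have h2 : S h (DirectSum.of (fun ξ => eig ξ) ξ v)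
          = DirectSum.of (fun ξ => eig ξ) ξ (ξ h • v) := by
        apply DFinsupp.ext
        intro ζ
        rw [Sapp]
        by_cases hz : ζ = ξ
        · subst hz; simp
        · simp [DirectSum.of_eq_of_ne _ _ _ hz]
      rw [h1, h2, (heig ξ v).mp v.2 h]
      have h3 : e (DirectSum.of (fun ξ => eig ξ) ξ (ξ h • v)) = ((ξ h • v : eig ξ) : L) :=
        DirectSum.coeLinearMap_of eig ξ (ξ h • v)
      rw [h3]
      rfl
    | add a b ha hb =>
      rw [(S h).map_add, e.map_add, lie_add, ha, hb, e.map_add]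
  set c : H → ⨁ ξ, eig ξ := fun z => e.symm (z : L) with hc
  have heq : ∀ z : H, e (c z) = (z : L) := fun z => e.apply_symm_apply _
  have selfz : ∀ (z : H) ξ, (ξ z) • (c z ξ : eig ξ) = 0 := by
    intro z ξ
    have h0 : e (S z (c z)) = e 0 := by
      rw [← key z (c z), heq z, lie_self, e.map_zero]
    have h1 : S z (c z) = 0 := e.injective h0
    have h2 := congrArg (fun d => d ξ) h1
    simp only [Sapp] at h2
    rw [h2]
    rfl
  intro x y
  apply Subtype.ext
  show ⁅(x : L), (y : L)⁆ = 0
  rw [← heq y, key x (c y)]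
  have hz : S x (c y) = 0 := by
    apply DFinsupp.ext
    intro ξ
    rw [Sapp]
    by_cases h0 : (c y ξ : eig ξ) = 0
    · rw [h0, smul_zero]; rfl
    · have hξy : ξ y = 0 := by
        rcases smul_eq_zero.mp (selfz y ξ) with h | h
        · exact h
        · exact absurd h h0
      have hcadd : c (x + y) = c x + c y := by
        rw [hc]
        show e.symm ((↑(x + y) : L)) = _
        rw [show (↑(x + y) : L) = ↑x + ↑y from rfl, e.symm.map_add]
      have hsum := selfz (x + y) ξ
      rw [hcadd, ξ.map_add, hξy, add_zero] at hsum
      have hadd : ((c x + c y) ξ : eig ξ) = c x ξ + c y ξ := DirectSum.add_apply _ _ _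
      rw [hadd, smul_add, selfz x ξ, zero_add] at hsum
      rw [hsum]
      rfl
  rw [hz, e.map_zero]
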